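/- arXiv:2303.18180 — 4 statements merged into one kernel-verified Lean document; each statement's English description precedes it below -/
import Mathlib

section
/- If X ∈ ℝ^{q×r} has Hankel form, then P_q^T X P_r also has Hankel form, where P_n = (binom(j−1, i−1))_{i,j=1}^n is the Pascal matrix. Explicitly, the (i,j) entry of P_q^T X P_r equals the sum over k from 1 to i+j−1 of binom(i+j−2, k−1)·ξ_k, where X = (ξ_{i+j−1}). -/
open Matrix BigOperators Finset

/-- Pascal matrix `P_n` with entries `binom(j−1, i−1)` (1-based). -/
def Pascal (n : ℕ) : Matrix (Fin n) (Fin n) ℝ :=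
  Matrix.of fun i j => (Nat.choose (j : ℕ) (i : ℕ) : ℝ)

/-- `X` has Hankel form: entries depend only on `i + j`. -/
def IsHankel {q r : ℕ} (X : Matrix (Fin q) (Fin r) ℝ) : Prop :=
  ∀ i i' : Fin q, ∀ j j' : Fin r,
    (i : ℕ) + (j : ℕ) = (i' : ℕ) + (j' : ℕ) → X i j = X i' j'

lemma key (i j : ℕ) (ξ : ℕ → ℝ) (q r : ℕ) (hi : i < q) (hj : j < r) :
    ∑ a ∈ Finset.range q, ∑ b ∈ Finset.range r,
        (Nat.choose i a : ℝ) * (Nat.choose j b : ℝ) * ξ (a + b)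
      = ∑ k ∈ Finset.range (i + j + 1), (Nat.choose (i + j) k : ℝ) * ξ k := by
  have hinner : ∀ a : ℕ, (∑ b ∈ Finset.range r,
        (Nat.choose i a : ℝ) * (Nat.choose j b : ℝ) * ξ (a + b))
      = ∑ b ∈ Finset.range (j+1),
        (Nat.choose i a : ℝ) * (Nat.choose j b : ℝ) * ξ (a + b) := by
    intro a
    refine (Finset.sum_subset (Finset.range_subset_range.2 hj) ?_).symm
    intro b _ hb
    have hb' : j < b := by simpa using hb
    rw [Nat.choose_eq_zero_of_lt hb']
    simp
  simp_rw [hinner]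
  have houter : ∑ a ∈ Finset.range q, ∑ b ∈ Finset.range (j+1),
        (Nat.choose i a : ℝ) * (Nat.choose j b : ℝ) * ξ (a + b)
      = ∑ a ∈ Finset.range (i+1), ∑ b ∈ Finset.range (j+1),
        (Nat.choose i a : ℝ) * (Nat.choose j b : ℝ) * ξ (a + b) := by
    refine (Finset.sum_subset (Finset.range_subset_range.2 hi) ?_).symm
    intro a _ ha
    have ha' : i < a := by simpa using ha
    rw [Nat.choose_eq_zero_of_lt ha']
    simp
  rw [houter]
  have hT1 : ∑ a ∈ Finset.range (i+1), ∑ b ∈ Finset.range (j+1),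
        (Nat.choose i a : ℝ) * (Nat.choose j b : ℝ) * ξ (a + b)
      = ∑ p ∈ (Finset.range (i+j+1)).sigma (fun a => Finset.range (i+j+1-a)),
        (Nat.choose i p.1 : ℝ) * (Nat.choose j p.2 : ℝ) * ξ (p.1 + p.2) := by
    rw [Finset.sum_sigma' (Finset.range (i+1)) (fun _ => Finset.range (j+1))
      (fun a b => (Nat.choose i a : ℝ) * (Nat.choose j b : ℝ) * ξ (a + b))]
    refine Finset.sum_subset ?_ ?_
    · rintro ⟨a, b⟩ hp
      simp only [Finset.mem_sigma, Finset.mem_range] at hp ⊢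
      omega
    · rintro ⟨a, b⟩ _ hp
      simp only [Finset.mem_sigma, Finset.mem_range] at hp
      rcases Nat.lt_or_ge i a with h | h
      · rw [Nat.choose_eq_zero_of_lt h]; simp
      · have : j < b := by omega
        rw [Nat.choose_eq_zero_of_lt this]; simp
  have hRHS : ∑ k ∈ Finset.range (i + j + 1), (Nat.choose (i+j) k : ℝ) * ξ k
      = ∑ s ∈ (Finset.range (i+j+1)).sigma (fun k => Finset.range (k+1)),
        (Nat.choose i s.2 : ℝ) * (Nat.choose j (s.1 - s.2) : ℝ) * ξ s.1 := by
    rw [Finset.sum_sigma]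
    dsimp only
    refine Finset.sum_congr rfl fun k _ => ?_
    rw [Nat.add_choose_eq, Finset.Nat.sum_antidiagonal_eq_sum_range_succ_mk]
    push_cast
    rw [Finset.sum_mul]
  rw [hT1, hRHS]
  refine Finset.sum_nbij' (fun p => ⟨p.1 + p.2, p.1⟩) (fun s => ⟨s.2, s.1 - s.2⟩)
    ?_ ?_ ?_ ?_ ?_
  · rintro ⟨a, b⟩ hp
    dsimp only
    simp only [Finset.mem_sigma, Finset.mem_range] at hp ⊢
    omega
  · rintro ⟨k, a⟩ hs
    dsimp only
    simp only [Finset.mem_sigma, Finset.mem_range] at hs ⊢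
    omega
  · rintro ⟨a, b⟩ hp
    simp
  · rintro ⟨k, a⟩ hs
    simp only [Finset.mem_sigma, Finset.mem_range] at hs
    have hak : a + (k - a) = k := by omega
    simp [hak]
  · rintro ⟨a, b⟩ hp
    simp

/-- Congruence with Pascal matrices preserves Hankel form, with the explicit
entry formula `(P_qᵀ X P_r)_{ij} = ∑_{k=1}^{i+j−1} binom(i+j−2, k−1) ξ_k` (1-based). -/
theorem stmt2 (q r : ℕ) (X : Matrix (Fin q) (Fin r) ℝ) (ξ : ℕ → ℝ)
    (hX : ∀ (i : Fin q) (j : Fin r), X i j = ξ ((i : ℕ) + (j : ℕ))) :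
    IsHankel ((Pascal q)ᵀ * X * Pascal r) ∧
      ∀ (i : Fin q) (j : Fin r),
        ((Pascal q)ᵀ * X * Pascal r) i j =
          ∑ k ∈ Finset.range ((i : ℕ) + (j : ℕ) + 1),
            (Nat.choose ((i : ℕ) + (j : ℕ)) k : ℝ) * ξ k := by
  have hentry : ∀ (i : Fin q) (j : Fin r),
      ((Pascal q)ᵀ * X * Pascal r) i j =
        ∑ k ∈ Finset.range ((i : ℕ) + (j : ℕ) + 1),
          (Nat.choose ((i : ℕ) + (j : ℕ)) k : ℝ) * ξ k := by
    intro i j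
    have h1 : ((Pascal q)ᵀ * X * Pascal r) i j
        = ∑ a : Fin q, ∑ b : Fin r,
            (Nat.choose (i : ℕ) (a : ℕ) : ℝ) * (Nat.choose (j : ℕ) (b : ℕ) : ℝ)
              * ξ ((a : ℕ) + (b : ℕ)) := by
      simp only [Matrix.mul_apply, Finset.sum_mul, Pascal, transpose_apply, of_apply]
      rw [Finset.sum_comm]
      refine Finset.sum_congr rfl fun a _ => Finset.sum_congr rfl fun b _ => ?_
      rw [hX a b]; ring
    have h2 : ∀ a : ℕ, (∑ b : Fin r,
        (Nat.choose (i : ℕ) a : ℝ) * (Nat.choose (j : ℕ) (b : ℕ) : ℝ) * ξ (a + (b : ℕ)))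
        = ∑ b ∈ Finset.range r,
          (Nat.choose (i : ℕ) a : ℝ) * (Nat.choose (j : ℕ) b : ℝ) * ξ (a + b) := fun a =>
      Fin.sum_univ_eq_sum_range
        (fun b => (Nat.choose (i : ℕ) a : ℝ) * (Nat.choose (j : ℕ) b : ℝ) * ξ (a + b)) r
    have h3 : (∑ a : Fin q, ∑ b : Fin r,
        (Nat.choose (i : ℕ) (a : ℕ) : ℝ) * (Nat.choose (j : ℕ) (b : ℕ) : ℝ)
          * ξ ((a : ℕ) + (b : ℕ)))
        = ∑ a ∈ Finset.range q, ∑ b ∈ Finset.range r,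
          (Nat.choose (i : ℕ) a : ℝ) * (Nat.choose (j : ℕ) b : ℝ) * ξ (a + b) := by
      rw [Fin.sum_univ_eq_sum_range
        (fun a => ∑ b : Fin r,
          (Nat.choose (i : ℕ) a : ℝ) * (Nat.choose (j : ℕ) (b : ℕ) : ℝ) * ξ (a + (b : ℕ))) q]
      exact Finset.sum_congr rfl fun a _ => h2 a
    rw [h1, h3]
    exact key (i : ℕ) (j : ℕ) ξ q r i.isLt j.isLt
  refine ⟨?_, hentry⟩
  intro i i' j j' h
  rw [hentry i j, hentry i' j', h]
end

section
/- The Pascal matrix P_n with entries binom(j−1, i−1) equals the matrix exponential exp(Ẽ_n) of the nilpotent matrix Ẽ_n ∈ ℝ^{n×n} with entries (Ẽ_n)_{i,i+1} = i and zeros elsewhere. -/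
open Matrix BigOperators

/-- The nilpotent matrix `Ẽ_n` with entries `(Ẽ_n)_{i,i+1} = i` (1-based). -/
def Etilde (n : ℕ) : Matrix (Fin n) (Fin n) ℝ :=
  Matrix.of fun i j => if (j : ℕ) = (i : ℕ) + 1 then ((i : ℕ) + 1 : ℝ) else 0

lemma Etilde_apply (n : ℕ) (i j : Fin n) :
    Etilde n i j = if (j : ℕ) = (i : ℕ) + 1 then ((i : ℕ) + 1 : ℝ) else 0 := rfl

lemma Etilde_pow_apply (n k : ℕ) (i j : Fin n) :
    ((Etilde n) ^ k) i j =
      if (j : ℕ) = (i : ℕ) + k then ((((i : ℕ) + 1).ascFactorial k : ℕ) : ℝ) else 0 := by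
  induction k generalizing j with
  | zero =>
    simp [Matrix.one_apply, Fin.ext_iff, eq_comm]
  | succ k ih =>
    rw [pow_succ, Matrix.mul_apply]
    simp only [ih, Etilde_apply, ite_mul, zero_mul, mul_ite, mul_zero]
    by_cases h : (i : ℕ) + k < n
    · have : ∀ l : Fin n, ((l : ℕ) = (i : ℕ) + k) ↔ l = ⟨(i : ℕ) + k, h⟩ := by
        intro l; simp [Fin.ext_iff]
      simp only [this]
      rw [Finset.sum_eq_single (⟨(i : ℕ) + k, h⟩ : Fin n)]
      · simp only [if_pos rfl, if_true]
        by_cases hj : (j : ℕ) = (i : ℕ) + k + 1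
        · rw [if_pos hj, if_pos (by omega)]
          rw [Nat.ascFactorial_succ]
          push_cast
          ring
        · rw [if_neg hj, if_neg (by omega)]
      · intro b _ hb
        simp [hb]
      · simp
    · have h1 : ∀ l : Fin n, ¬ ((l : ℕ) = (i : ℕ) + k) := by
        intro l; have := l.isLt; omega
      have h2 : ¬ ((j : ℕ) = (i : ℕ) + (k + 1)) := by
        have := j.isLt; omega
      simp [h1, h2]

lemma Etilde_pow_eq_zero (n : ℕ) : (Etilde n) ^ n = 0 := by
  ext i j
  rw [Etilde_pow_apply]
  have := j.isLt
  have hi : (0 : ℕ) ≤ (i : ℕ) := Nat.zero_le _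
  rw [if_neg (by omega)]
  rfl

lemma Pascal_eq_sum (n : ℕ) :
    Pascal n = ∑ k ∈ Finset.range n, ((Nat.factorial k : ℝ))⁻¹ • (Etilde n) ^ k := by
  ext i j
  rw [Matrix.sum_apply]
  simp only [Matrix.smul_apply, Etilde_pow_apply, smul_ite, smul_zero, smul_eq_mul]
  by_cases hij : (i : ℕ) ≤ (j : ℕ)
  · rw [Finset.sum_eq_single ((j : ℕ) - (i : ℕ))]
    · rw [if_pos (by omega)]
      have hfac : (((i : ℕ) + 1).ascFactorial ((j : ℕ) - (i : ℕ)) : ℕ) =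
          ((j : ℕ) - (i : ℕ)).factorial * ((j : ℕ).choose ((j : ℕ) - (i : ℕ))) := by
        rw [Nat.ascFactorial_eq_factorial_mul_choose]
        congr 2 <;> omega
      rw [Pascal]
      simp only [Matrix.of_apply]
      rw [hfac, Nat.choose_symm hij]
      push_cast
      rw [← mul_assoc, inv_mul_cancel₀ (by positivity), one_mul]
    · intro b _ hb
      rw [if_neg (by omega), mul_zero]
    · intro hb
      exfalso
      exact hb (Finset.mem_range.mpr (by have := j.isLt; omega))
  · have h0 : ∀ k ∈ Finset.range n, ((Nat.factorial k : ℝ))⁻¹ *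
        (if (j : ℕ) = (i : ℕ) + k then ((((i : ℕ) + 1).ascFactorial k : ℕ) : ℝ) else 0) = 0 := by
      intro k _
      rw [if_neg (by omega), mul_zero]
    rw [Finset.sum_congr rfl h0, Finset.sum_const, smul_zero]
    have hc : (j : ℕ).choose (i : ℕ) = 0 := Nat.choose_eq_zero_of_lt (by omega)
    simp [Pascal, hc]

/-- `Ẽ_n` is nilpotent and the Pascal matrix is its matrix exponential
(a finite sum, by nilpotency). -/
theorem stmt5 (n : ℕ) :
    (Etilde n) ^ n = 0 ∧ Pascal n = NormedSpace.exp (Etilde n) ∧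
      Pascal n = ∑ k ∈ Finset.range n, ((Nat.factorial k : ℝ))⁻¹ • (Etilde n) ^ k := by
  refine ⟨Etilde_pow_eq_zero n, ?_, Pascal_eq_sum n⟩
  rw [NormedSpace.exp_eq_tsum (𝕂 := ℝ)]
  beta_reduce
  rw [tsum_eq_sum (s := Finset.range n) ?_]
  · exact Pascal_eq_sum n
  · intro k hk
    have hnk : n ≤ k := Nat.le_of_not_lt (by simpa using hk)
    rw [pow_eq_zero_of_le hnk (Etilde_pow_eq_zero n), smul_zero]
end

section
/- If a matrix K_n ∈ ℝ^{s×s} satisfies the one-leg conditions (c^{l−1})^T K_n = 𝟙^T K_n C^{l−1} for l = 1,…,q, where C = diag(c_1,…,c_s), then for every k ∈ ℕ the matrix V_q^T K_n V_k has Hankel form. In fact, V_q^T K_n V_k = V_q^T D_K V_k where D_K is the diagonal matrix of the column sums of K_n. -/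
open Matrix BigOperators

/-- Vandermonde matrix `V_q = (𝟙, c, c², …, c^{q−1}) ∈ ℝ^{s×q}` (entrywise powers). -/
def Vand {s : ℕ} (c : Fin s → ℝ) (q : ℕ) : Matrix (Fin s) (Fin q) ℝ :=
  Matrix.of fun i j => c i ^ (j : ℕ)

/-- If `K_n` satisfies the one-leg conditions `(c^{l−1})ᵀ K_n = 𝟙ᵀ K_n C^{l−1}`,
`l = 1, …, q`, then `V_qᵀ K_n V_k` has Hankel form for every `k`, and in fact equals
`V_qᵀ D_K V_k` where `D_K` is the diagonal matrix of the column sums of `K_n`. -/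
theorem stmt6 (s q : ℕ) (c : Fin s → ℝ) (Kn : Matrix (Fin s) (Fin s) ℝ)
    (holeg : ∀ l : ℕ, l < q → ∀ j : Fin s,
      ∑ i, c i ^ l * Kn i j = (∑ i, Kn i j) * c j ^ l) :
    ∀ k : ℕ,
      IsHankel ((Vand c q)ᵀ * Kn * Vand c k) ∧
      (Vand c q)ᵀ * Kn * Vand c k =
        (Vand c q)ᵀ * Matrix.diagonal (fun j => ∑ i, Kn i j) * Vand c k := by
  intro k
  have key : ∀ (a : Fin q) (b : Fin k),
      ((Vand c q)ᵀ * Kn * Vand c k) a b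
        = ∑ j, (∑ i, Kn i j) * c j ^ ((a : ℕ) + (b : ℕ)) := by
    intro a b
    simp only [Matrix.mul_apply, Matrix.transpose_apply, Vand, Matrix.of_apply]
    refine Finset.sum_congr rfl fun j _ => ?_
    rw [holeg a a.isLt j, mul_assoc, ← pow_add]
  constructor
  · intro i i' j j' h
    rw [key, key, h]
  · ext a b
    rw [key]
    simp only [Matrix.mul_apply, Matrix.transpose_apply, Vand, Matrix.of_apply,
      Matrix.diagonal_apply]
    refine Finset.sum_congr rfl fun j _ => ?_
    simp only [mul_ite, mul_zero, Finset.sum_ite_eq', Finset.mem_univ, if_pos]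
    ring
end

section
/- Let p ∈ C^q([0,T], ℝ^m) and suppose K ∈ ℝ^{s×s} satisfies (c^{l−1})^T K = 𝟙^T K C^{l−1} for l = 1,…,q, where C = diag(c_i). Then for any t ∈ [0,T] with t + c_i h ∈ [0,T] for all i, Σ_{i=1}^s K_{ij} p(t + c_i h) − (𝟙^T K e_j) p(t + c_j h) = O(h^q) as h → 0, for each j = 1,…,s, with constant bounded by a multiple of the sup norm of the q-th derivative of p. -/
open Matrix BigOperators

/-- Estimate (FeKP) of Lemma 4.1: if `p ∈ C^q([0,T], ℝ^m)` and `K` satisfies the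
one-leg conditions `(c^{l−1})ᵀ K = 𝟙ᵀ K C^{l−1}` for `l = 1,…,q`, then
`Σᵢ K_{ij} p(t + cᵢh) − (𝟙ᵀ K e_j) p(t + c_jh) = O(h^q)`, with constant bounded by a
multiple of the sup norm of the `q`-th derivative of `p`. -/
theorem stmt17 (s q m : ℕ) (T : ℝ) (hT : 0 < T) (c : Fin s → ℝ)
    (K : Matrix (Fin s) (Fin s) ℝ)
    (holeg : ∀ l : ℕ, l < q → ∀ j : Fin s,
      ∑ i, c i ^ l * K i j = (∑ i, K i j) * c j ^ l)
    (p : ℝ → EuclideanSpace ℝ (Fin m))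
    (hp : ContDiffOn ℝ q p (Set.Icc 0 T)) :
    ∃ Cb : ℝ, 0 ≤ Cb ∧
      ∀ h : ℝ, 0 < h → ∀ t ∈ Set.Icc (0 : ℝ) T,
        (∀ i : Fin s, t + c i * h ∈ Set.Icc (0 : ℝ) T) →
        ∀ j : Fin s,
          ‖(∑ i, K i j • p (t + c i * h)) - (∑ i, K i j) • p (t + c j * h)‖ ≤
            Cb * (⨆ x : Set.Icc (0 : ℝ) T,
              ‖iteratedDerivWithin q p (Set.Icc (0 : ℝ) T) x‖) * h ^ q := by
  set S : Set ℝ := Set.Icc (0 : ℝ) T with hSdef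
  set M : ℝ := ⨆ x : S, ‖iteratedDerivWithin q p S x‖ with hMdef
  have hUD : UniqueDiffOn ℝ S := uniqueDiffOn_Icc hT
  have hM0 : 0 ≤ M := Real.iSup_nonneg fun x => norm_nonneg _
  have hbdd : BddAbove (Set.range fun x : S => ‖iteratedDerivWithin q p S x‖) := by
    obtain ⟨C, hC⟩ := (isCompact_Icc (a := (0:ℝ)) (b := T)).exists_bound_of_continuousOn
      (hp.continuousOn_iteratedDerivWithin le_rfl hUD)
    exact ⟨C, by rintro _ ⟨x, rfl⟩; exact hC x x.2⟩
  have hM : ∀ x ∈ S, ‖iteratedDerivWithin q p S x‖ ≤ M := fun x hx =>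
    le_ciSup hbdd (⟨x, hx⟩ : S)
  rcases Nat.eq_zero_or_pos q with hq | hq
  · -- degenerate case q = 0
    subst hq
    refine ⟨∑ j, ((∑ i, |K i j|) + |∑ i, K i j|), by positivity, ?_⟩
    intro h hh t ht hc j
    have hM' : ∀ x ∈ S, ‖p x‖ ≤ M := by
      intro x hx
      have := hM x hx
      rwa [iteratedDerivWithin_zero] at this
    have h1 : ‖∑ i, K i j • p (t + c i * h)‖ ≤ (∑ i, |K i j|) * M := by
      calc ‖∑ i, K i j • p (t + c i * h)‖ ≤ ∑ i, ‖K i j • p (t + c i * h)‖ :=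
            norm_sum_le _ _
        _ ≤ ∑ i, |K i j| * M := by
            refine Finset.sum_le_sum fun i _ => ?_
            rw [norm_smul, Real.norm_eq_abs]
            exact mul_le_mul_of_nonneg_left (hM' _ (hc i)) (abs_nonneg _)
        _ = (∑ i, |K i j|) * M := by rw [Finset.sum_mul]
    have h2 : ‖(∑ i, K i j) • p (t + c j * h)‖ ≤ |∑ i, K i j| * M := by
      rw [norm_smul, Real.norm_eq_abs]
      exact mul_le_mul_of_nonneg_left (hM' _ (hc j)) (abs_nonneg _)
    have h3 : (∑ i, |K i j|) + |∑ i, K i j| ≤ ∑ j', ((∑ i, |K i j'|) + |∑ i, K i j'|) :=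
      Finset.single_le_sum (f := fun j' => (∑ i, |K i j'|) + |∑ i, K i j'|)
        (fun j' _ => by positivity) (Finset.mem_univ j)
    calc ‖(∑ i, K i j • p (t + c i * h)) - (∑ i, K i j) • p (t + c j * h)‖
        ≤ ((∑ i, |K i j|) + |∑ i, K i j|) * M := by
          refine (norm_sub_le _ _).trans ?_
          rw [add_mul]; exact add_le_add h1 h2
      _ ≤ (∑ j', ((∑ i, |K i j'|) + |∑ i, K i j'|)) * M * h ^ 0 := by
          rw [pow_zero, mul_one]; exact mul_le_mul_of_nonneg_right h3 hM0
  · -- main case q = n + 1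
    obtain ⟨n, rfl⟩ : ∃ n, q = n + 1 := ⟨q - 1, (Nat.succ_pred_eq_of_pos hq).symm⟩
    -- two-sided Taylor remainder bound
    have main : ∀ x ∈ S, ∀ t ∈ S,
        ‖p x - taylorWithinEval p n S t x‖ ≤ M * |x - t| ^ (n + 1) := by
      intro x hx t ht
      have hs'S : Set.Icc (min t x) (max t x) ⊆ S :=
        Set.Icc_subset_Icc (le_min ht.1 hx.1) (max_le ht.2 hx.2)
      have hdiffOn : DifferentiableOn ℝ (iteratedDerivWithin n p S) S :=
        hp.differentiableOn_iteratedDerivWithin (by exact_mod_cast Nat.lt_succ_self n) hUD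
      have hF : ∀ y ∈ Set.Icc (min t x) (max t x),
          HasDerivWithinAt (fun y => taylorWithinEval p n S y x)
            (((Nat.factorial n : ℝ)⁻¹ * (x - y) ^ n) • iteratedDerivWithin (n + 1) p S y)
            (Set.Icc (min t x) (max t x)) y := fun y hy =>
        (hasDerivWithinAt_taylorWithinEval_at_Icc x hT (hs'S hy)
          (hp.of_le (by exact_mod_cast Nat.le_succ n)) hdiffOn).mono hs'S
      have hbound : ∀ y ∈ Set.Icc (min t x) (max t x),
          ‖((Nat.factorial n : ℝ)⁻¹ * (x - y) ^ n) • iteratedDerivWithin (n + 1) p S y‖ ≤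
            |x - t| ^ n * M := by
        intro y hy
        have h3 : |x - y| ≤ |x - t| := by
          rcases le_total t x with htx | htx
          · rw [min_eq_left htx, max_eq_right htx] at hy
            rw [abs_of_nonneg (by linarith [hy.2]), abs_of_nonneg (by linarith)]
            linarith [hy.1]
          · rw [min_eq_right htx, max_eq_left htx] at hy
            rw [abs_of_nonpos (by linarith [hy.1]), abs_of_nonpos (by linarith)]
            linarith [hy.2]
        rw [norm_smul, Real.norm_eq_abs, abs_mul, abs_pow]
        have e1 : |(Nat.factorial n : ℝ)⁻¹| ≤ 1 := by
          rw [abs_of_nonneg (by positivity)]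
          rw [inv_le_one_iff₀]
          right; exact_mod_cast Nat.one_le_iff_ne_zero.mpr (Nat.factorial_ne_zero n)
        calc |(Nat.factorial n : ℝ)⁻¹| * |x - y| ^ n * ‖iteratedDerivWithin (n + 1) p S y‖
            ≤ 1 * |x - t| ^ n * M := by
              have hIter := hM y (hs'S hy)
              have hpow : |x - y| ^ n ≤ |x - t| ^ n := pow_le_pow_left₀ (abs_nonneg _) h3 n
              exact mul_le_mul (mul_le_mul e1 hpow (by positivity) zero_le_one) hIter
                (norm_nonneg _) (by positivity)
          _ = |x - t| ^ n * M := by ring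
      have hmvt := Convex.norm_image_sub_le_of_norm_hasDerivWithin_le hF hbound
        (convex_Icc _ _)
        (Set.mem_Icc.mpr ⟨min_le_left _ _, le_max_left _ _⟩)
        (Set.mem_Icc.mpr ⟨min_le_right _ _, le_max_right _ _⟩)
      rw [taylorWithinEval_self, Real.norm_eq_abs] at hmvt
      calc ‖p x - taylorWithinEval p n S t x‖ ≤ |x - t| ^ n * M * |x - t| := hmvt
        _ = M * |x - t| ^ (n + 1) := by rw [pow_succ]; ring
    -- cancellation of the Taylor polynomial terms
    have cancel : ∀ (t h : ℝ) (j : Fin s),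
        (∑ i, K i j • taylorWithinEval p n S t (t + c i * h)) =
          (∑ i, K i j) • taylorWithinEval p n S t (t + c j * h) := by
      intro t h j
      simp only [taylor_within_apply, add_sub_cancel_left, mul_pow, Finset.smul_sum, smul_smul]
      rw [Finset.sum_comm]
      refine Finset.sum_congr rfl fun k hk => ?_
      rw [← Finset.sum_smul]
      congr 1
      have hol := holeg k (Finset.mem_range.mp hk) j
      calc ∑ i, K i j * ((Nat.factorial k : ℝ)⁻¹ * (c i ^ k * h ^ k))
          = (∑ i, c i ^ k * K i j) * ((Nat.factorial k : ℝ)⁻¹ * h ^ k) := by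
            rw [Finset.sum_mul]
            exact Finset.sum_congr rfl fun i _ => by ring
        _ = ((∑ i, K i j) * c j ^ k) * ((Nat.factorial k : ℝ)⁻¹ * h ^ k) := by rw [hol]
        _ = (∑ i, K i j) * ((Nat.factorial k : ℝ)⁻¹ * (c j ^ k * h ^ k)) := by ring
    refine ⟨∑ j', ((∑ i, |K i j'| * |c i| ^ (n + 1)) + |∑ i, K i j'| * |c j'| ^ (n + 1)),
      by positivity, ?_⟩
    intro h hh t ht hc j
    have key : (∑ i, K i j • p (t + c i * h)) - (∑ i, K i j) • p (t + c j * h) =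
        (∑ i, K i j • (p (t + c i * h) - taylorWithinEval p n S t (t + c i * h))) -
          (∑ i, K i j) • (p (t + c j * h) - taylorWithinEval p n S t (t + c j * h)) := by
      simp only [smul_sub, Finset.sum_sub_distrib]
      rw [cancel t h j]
      abel
    have habs : ∀ i : Fin s, |t + c i * h - t| ^ (n + 1) = |c i| ^ (n + 1) * h ^ (n + 1) := by
      intro i
      rw [add_sub_cancel_left, abs_mul, abs_of_pos hh, mul_pow]
    have h1 : ‖∑ i, K i j • (p (t + c i * h) - taylorWithinEval p n S t (t + c i * h))‖ ≤
        (∑ i, |K i j| * |c i| ^ (n + 1)) * M * h ^ (n + 1) := by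
      calc ‖∑ i, K i j • (p (t + c i * h) - taylorWithinEval p n S t (t + c i * h))‖
          ≤ ∑ i, ‖K i j • (p (t + c i * h) - taylorWithinEval p n S t (t + c i * h))‖ :=
            norm_sum_le _ _
        _ ≤ ∑ i, |K i j| * (M * (|c i| ^ (n + 1) * h ^ (n + 1))) := by
            refine Finset.sum_le_sum fun i _ => ?_
            rw [norm_smul, Real.norm_eq_abs]
            refine mul_le_mul_of_nonneg_left ?_ (abs_nonneg _)
            have := main _ (hc i) t ht
            rwa [habs i] at this
        _ = (∑ i, |K i j| * |c i| ^ (n + 1)) * M * h ^ (n + 1) := by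
            rw [Finset.sum_mul, Finset.sum_mul]
            exact Finset.sum_congr rfl fun i _ => by ring
    have h2 : ‖(∑ i, K i j) • (p (t + c j * h) - taylorWithinEval p n S t (t + c j * h))‖ ≤
        |∑ i, K i j| * |c j| ^ (n + 1) * M * h ^ (n + 1) := by
      rw [norm_smul, Real.norm_eq_abs]
      have := main _ (hc j) t ht
      rw [habs j] at this
      calc |∑ i, K i j| * ‖p (t + c j * h) - taylorWithinEval p n S t (t + c j * h)‖
          ≤ |∑ i, K i j| * (M * (|c j| ^ (n + 1) * h ^ (n + 1))) :=
            mul_le_mul_of_nonneg_left this (abs_nonneg _)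
        _ = |∑ i, K i j| * |c j| ^ (n + 1) * M * h ^ (n + 1) := by ring
    have h3 : (∑ i, |K i j| * |c i| ^ (n + 1)) + |∑ i, K i j| * |c j| ^ (n + 1) ≤
        ∑ j', ((∑ i, |K i j'| * |c i| ^ (n + 1)) + |∑ i, K i j'| * |c j'| ^ (n + 1)) :=
      Finset.single_le_sum
        (f := fun j' => (∑ i, |K i j'| * |c i| ^ (n + 1)) + |∑ i, K i j'| * |c j'| ^ (n + 1))
        (fun j' _ => by positivity) (Finset.mem_univ j)
    rw [key]
    calc ‖(∑ i, K i j • (p (t + c i * h) - taylorWithinEval p n S t (t + c i * h))) -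
          (∑ i, K i j) • (p (t + c j * h) - taylorWithinEval p n S t (t + c j * h))‖
        ≤ ((∑ i, |K i j| * |c i| ^ (n + 1)) + |∑ i, K i j| * |c j| ^ (n + 1)) * M *
            h ^ (n + 1) := by
          refine (norm_sub_le _ _).trans ?_
          rw [add_mul, add_mul]
          exact add_le_add h1 h2
      _ ≤ (∑ j', ((∑ i, |K i j'| * |c i| ^ (n + 1)) + |∑ i, K i j'| * |c j'| ^ (n + 1))) * M *
            h ^ (n + 1) := by
          have : (0:ℝ) ≤ h ^ (n + 1) := by positivity
          gcongr
end
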